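/- Let k be a commutative ring, H a k-bialgebra, A a k-algebra, and κ : H×A → A, (h,a) ↦ h·a, a k-bilinear map satisfying (4.1.0) h·(ab) = (h_{(1)}·a)(h_{(2)}·b). Define m : (A⊗H)×(A⊗H) → A⊗H by m(a⊗h, b⊗g) = a(h_{(1)}·b) ⊗ h_{(2)}g, and the right A-action on A⊗H by (a⊗h)◁b = a(h_{(1)}·b) ⊗ h_{(2)}. Then the following are equivalent: (i) m is associative; (ii) m is right A-linear, i.e. m(ξ, η◁b) = m(ξ,η)◁b for all ξ,η ∈ A⊗H and b ∈ A; (iii) condition (4.1.1) h·(a(g·b)) = (h_{(1)}·a)((h_{(2)}g)·b) holds for all a,b ∈ A and h,g ∈ H. -/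

import Mathlib

open TensorProduct
set_option synthInstance.maxHeartbeats 400000
set_option maxHeartbeats 1000000
set_option linter.unusedVariables false

/-- For `f g : H →ₗ[k] A`, the map `h ↦ Σ f(h⁽¹⁾) * g(h⁽²⁾)` (Sweedler notation). -/
noncomputable def comulLift (k A H : Type*) [CommRing k] [Ring A] [Algebra k A]
    [Ring H] [Bialgebra k H] (f g : H →ₗ[k] A) (h : H) : A :=
  TensorProduct.lift ((LinearMap.mul k A).compl₁₂ f g) (Coalgebra.comul (R := k) h)

/-- The twist map `H ⊗ A → A ⊗ H`, `h ⊗ b ↦ (h⁽¹⁾·b) ⊗ h⁽²⁾`, associated to a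
measuring `κ : H → A → A`. -/
noncomputable def smashTwist (k A H : Type*) [CommRing k] [Ring A] [Algebra k A]
    [Ring H] [Bialgebra k H] (κ : H →ₗ[k] A →ₗ[k] A) :
    H ⊗[k] A →ₗ[k] A ⊗[k] H :=
  ((TensorProduct.lift κ).rTensor H) ∘ₗ
    (TensorProduct.assoc k H A H).symm.toLinearMap ∘ₗ
    (LinearMap.lTensor H (TensorProduct.comm k H A).toLinearMap) ∘ₗ
    (TensorProduct.assoc k H H A).toLinearMap ∘ₗ
    ((Coalgebra.comul (R := k) (A := H)).rTensor A)

/-- The right `A`-action `(a ⊗ h) ◁ b = a(h⁽¹⁾·b) ⊗ h⁽²⁾` on `A ⊗ H`, as a linear map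
`(A ⊗ H) ⊗ A → A ⊗ H`. -/
noncomputable def smashAct (k A H : Type*) [CommRing k] [Ring A] [Algebra k A]
    [Ring H] [Bialgebra k H] (κ : H →ₗ[k] A →ₗ[k] A) :
    (A ⊗[k] H) ⊗[k] A →ₗ[k] A ⊗[k] H :=
  ((LinearMap.mul' k A).rTensor H) ∘ₗ
    (TensorProduct.assoc k A A H).symm.toLinearMap ∘ₗ
    (LinearMap.lTensor A (smashTwist k A H κ)) ∘ₗ
    (TensorProduct.assoc k A H A).toLinearMap

/-- The smash product multiplication `m(a ⊗ h, b ⊗ g) = a(h⁽¹⁾·b) ⊗ h⁽²⁾g` on `A ⊗ H`,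
as a linear map `(A ⊗ H) ⊗ (A ⊗ H) → A ⊗ H`. -/
noncomputable def smashMul (k A H : Type*) [CommRing k] [Ring A] [Algebra k A]
    [Ring H] [Bialgebra k H] (κ : H →ₗ[k] A →ₗ[k] A) :
    (A ⊗[k] H) ⊗[k] (A ⊗[k] H) →ₗ[k] A ⊗[k] H :=
  (LinearMap.lTensor A (LinearMap.mul' k H)) ∘ₗ
    (TensorProduct.assoc k A H H).toLinearMap ∘ₗ
    ((smashAct k A H κ).rTensor H) ∘ₗ
    (TensorProduct.assoc k (A ⊗[k] H) A H).symm.toLinearMap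

section Aux

variable (k A H : Type*) [CommRing k] [Ring A] [Algebra k A]
    [Ring H] [Bialgebra k H] (κ : H →ₗ[k] A →ₗ[k] A)

lemma smashTwist_tmul (h : H) (b : A) :
    smashTwist k A H κ (h ⊗ₜ[k] b) =
      TensorProduct.map (κ.flip b) LinearMap.id (Coalgebra.comul (R := k) h) := by
  unfold smashTwist
  simp only [LinearMap.comp_apply, LinearMap.rTensor_tmul]
  induction (Coalgebra.comul (R := k) h) using TensorProduct.induction_on with
  | zero => rw [zero_tmul]; simp only [map_zero]
  | tmul x y => simp
  | add x y hx hy =>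
      rw [add_tmul, map_add]
      simp only [map_add, hx, hy]

lemma smashAct_tmul (a b : A) (h : H) :
    smashAct k A H κ ((a ⊗ₜ[k] h) ⊗ₜ[k] b) =
      TensorProduct.map ((LinearMap.mulLeft k a) ∘ₗ κ.flip b) LinearMap.id
        (Coalgebra.comul (R := k) h) := by
  unfold smashAct
  simp only [LinearMap.comp_apply, LinearEquiv.coe_coe, assoc_tmul, LinearMap.lTensor_tmul,
    smashTwist_tmul]
  induction (Coalgebra.comul (R := k) h) using TensorProduct.induction_on with
  | zero => simp only [map_zero, tmul_zero]
  | tmul x y => simp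
  | add x y hx hy => simp only [map_add, tmul_add, hx, hy]

lemma smashMul_tmul (a b : A) (h g : H) :
    smashMul k A H κ ((a ⊗ₜ[k] h) ⊗ₜ[k] (b ⊗ₜ[k] g)) =
      TensorProduct.map ((LinearMap.mulLeft k a) ∘ₗ κ.flip b) (LinearMap.mulRight k g)
        (Coalgebra.comul (R := k) h) := by
  unfold smashMul
  simp only [LinearMap.comp_apply, LinearEquiv.coe_coe, assoc_symm_tmul, LinearMap.rTensor_tmul,
    smashAct_tmul]
  induction (Coalgebra.comul (R := k) h) using TensorProduct.induction_on with
  | zero => simp only [map_zero, zero_tmul]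
  | tmul x y => simp
  | add x y hx hy => simp only [map_add, add_tmul, hx, hy]

lemma smashMul_repr (a b : A) (g : H) {h : H} {ι : Type*} (r : Coalgebra.Repr k h ι) :
    smashMul k A H κ ((a ⊗ₜ[k] h) ⊗ₜ[k] (b ⊗ₜ[k] g)) =
      ∑ i ∈ r.index, (a * κ (r.left i) b) ⊗ₜ[k] (r.right i * g) := by
  rw [smashMul_tmul, ← r.eq, map_sum]
  simp

lemma comulLift_repr (f g' : H →ₗ[k] A) {h : H} {ι : Type*} (r : Coalgebra.Repr k h ι) :
    comulLift k A H f g' h = ∑ i ∈ r.index, f (r.left i) * g' (r.right i) := by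
  unfold comulLift
  rw [← r.eq, map_sum]
  simp

lemma smashAct_eq_smashMul (b : A) (ξ : A ⊗[k] H) :
    smashAct k A H κ (ξ ⊗ₜ[k] b) = smashMul k A H κ (ξ ⊗ₜ[k] (b ⊗ₜ[k] (1 : H))) := by
  induction ξ using TensorProduct.induction_on with
  | zero => simp only [zero_tmul, map_zero]
  | tmul a h =>
      rw [smashAct_tmul, smashMul_tmul, LinearMap.mulRight_one]
  | add x y hx hy => simp only [add_tmul, map_add, hx, hy]

/-- Auxiliary: collapse `A ⊗ H → A` using the counit. -/
noncomputable def auxCounit (k A H : Type*) [CommRing k] [Ring A] [Algebra k A]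
    [Ring H] [Bialgebra k H] : A ⊗[k] H →ₗ[k] A :=
  (TensorProduct.rid k A).toLinearMap ∘ₗ
    LinearMap.lTensor A (Coalgebra.counit (R := k) (A := H))

@[simp] lemma auxCounit_tmul (a : A) (h : H) :
    auxCounit k A H (a ⊗ₜ[k] h) = Coalgebra.counit (R := k) h • a := by
  simp [auxCounit]

lemma counit_smul_sum {h : H} {ι : Type*} (r : Coalgebra.Repr k h ι) :
    ∑ i ∈ r.index, Coalgebra.counit (R := k) (r.right i) • r.left i = h := by
  have := congrArg (TensorProduct.rid k H) (Coalgebra.sum_tmul_counit_eq (R := k) r)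
  simp only [map_sum, TensorProduct.rid_tmul, one_smul] at this
  exact this

lemma auxCounit_smashMul (a b : A) (h g : H) :
    auxCounit k A H (smashMul k A H κ ((a ⊗ₜ[k] h) ⊗ₜ[k] (b ⊗ₜ[k] g))) =
      Coalgebra.counit (R := k) g • (a * κ h b) := by
  classical
  rw [smashMul_repr k A H κ a b g (Coalgebra.Repr.arbitrary k h), map_sum]
  set r := Coalgebra.Repr.arbitrary k h
  have key : ∑ i ∈ r.index, Coalgebra.counit (R := k) (r.right i) • (a * κ (r.left i) b)
      = a * κ h b := by
    have : ∀ i, a * κ (r.left i) b =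
        ((LinearMap.mulLeft k a) ∘ₗ κ.flip b) (r.left i) := by intro i; simp
    calc ∑ i ∈ r.index, Coalgebra.counit (R := k) (r.right i) • (a * κ (r.left i) b)
        = ((LinearMap.mulLeft k a) ∘ₗ κ.flip b)
            (∑ i ∈ r.index, Coalgebra.counit (R := k) (r.right i) • r.left i) := by
          rw [map_sum]; simp
      _ = a * κ h b := by rw [counit_smul_sum]; simp
  calc ∑ i ∈ r.index, auxCounit k A H ((a * κ (r.left i) b) ⊗ₜ[k] (r.right i * g))
      = ∑ i ∈ r.index, Coalgebra.counit (R := k) g •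
          (Coalgebra.counit (R := k) (r.right i) • (a * κ (r.left i) b)) := by
        refine Finset.sum_congr rfl fun i _ => ?_
        rw [auxCounit_tmul, Bialgebra.counit_mul, mul_comm, mul_smul]
    _ = Coalgebra.counit (R := k) g • (a * κ h b) := by
        rw [← Finset.smul_sum, key]

lemma coreB (a b : A) (h g : H)
    (eq1 : smashMul k A H κ (smashMul k A H κ (((1:A) ⊗ₜ[k] h) ⊗ₜ[k] (a ⊗ₜ[k] g)) ⊗ₜ[k]
            (b ⊗ₜ[k] (1:H))) =
        smashMul k A H κ (((1:A) ⊗ₜ[k] h) ⊗ₜ[k]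
            smashMul k A H κ ((a ⊗ₜ[k] g) ⊗ₜ[k] (b ⊗ₜ[k] (1:H))))) :
    κ h (a * κ g b) =
      comulLift k A H (κ.flip a) ((κ.flip b) ∘ₗ LinearMap.mulRight k g) h := by
  classical
  set r := Coalgebra.Repr.arbitrary k h with hr
  set t := Coalgebra.Repr.arbitrary k g with ht
  have E := congrArg (auxCounit k A H) eq1
  rw [smashMul_repr k A H κ 1 a g r, sum_tmul, map_sum, map_sum,
      smashMul_repr k A H κ a b 1 t, tmul_sum, map_sum, map_sum] at E
  simp only [auxCounit_smashMul, Bialgebra.counit_one, one_smul, one_mul, mul_one] at E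
  -- E : ∑ i, κ (r.left i) a * κ (r.right i * g) b
  --   = ∑ m, counit (t.right m) • κ h (a * κ (t.left m) b)
  have R : ∑ m ∈ t.index,
      Coalgebra.counit (R := k) (t.right m) • κ h (a * κ (t.left m) b) =
      κ h (a * κ g b) := by
    have : ∀ m, κ h (a * κ (t.left m) b) =
        ((κ h) ∘ₗ (LinearMap.mulLeft k a) ∘ₗ (κ.flip b)) (t.left m) := by intro m; simp
    calc ∑ m ∈ t.index,
        Coalgebra.counit (R := k) (t.right m) • κ h (a * κ (t.left m) b)
        = ((κ h) ∘ₗ (LinearMap.mulLeft k a) ∘ₗ (κ.flip b))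
            (∑ m ∈ t.index, Coalgebra.counit (R := k) (t.right m) • t.left m) := by
          rw [map_sum]; simp
      _ = κ h (a * κ g b) := by rw [counit_smul_sum]; simp
  rw [R] at E
  rw [comulLift_repr k A H _ _ r, ← E]
  simp

lemma coreA
    (hC : ∀ (h g : H) (a b : A),
        κ h (a * κ g b) =
          comulLift k A H (κ.flip a) ((κ.flip b) ∘ₗ LinearMap.mulRight k g) h)
    (a b c : A) (h g l : H) :
    smashMul k A H κ (smashMul k A H κ ((a ⊗ₜ[k] h) ⊗ₜ[k] (b ⊗ₜ[k] g)) ⊗ₜ[k] (c ⊗ₜ[k] l)) =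
      smashMul k A H κ ((a ⊗ₜ[k] h) ⊗ₜ[k]
        smashMul k A H κ ((b ⊗ₜ[k] g) ⊗ₜ[k] (c ⊗ₜ[k] l))) := by
  classical
  set r := Coalgebra.Repr.arbitrary k h with hr
  set t := Coalgebra.Repr.arbitrary k g with ht
  set u : (i : r.ι) → Coalgebra.Repr k (r.left i) (H × H) := fun i => Coalgebra.Repr.arbitrary k (r.left i) with hu
  set s : (i : r.ι) → Coalgebra.Repr k (r.right i) (H × H) := fun i => Coalgebra.Repr.arbitrary k (r.right i) with hs
  -- LHS
  have LHS : smashMul k A H κ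
      (smashMul k A H κ ((a ⊗ₜ[k] h) ⊗ₜ[k] (b ⊗ₜ[k] g)) ⊗ₜ[k] (c ⊗ₜ[k] l)) =
      ∑ i ∈ r.index, ∑ j ∈ (s i).index, ∑ m ∈ t.index,
        ((a * κ (r.left i) b) * κ ((s i).left j * t.left m) c) ⊗ₜ[k]
          (((s i).right j * t.right m) * l) := by
    rw [smashMul_repr k A H κ a b g r, sum_tmul, map_sum]
    refine Finset.sum_congr rfl fun i _ => ?_
    rw [smashMul_tmul, Bialgebra.comul_mul, ← (s i).eq, ← t.eq, Finset.sum_mul_sum, map_sum]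
    refine Finset.sum_congr rfl fun j _ => ?_
    rw [map_sum]
    refine Finset.sum_congr rfl fun m _ => ?_
    simp [Algebra.TensorProduct.tmul_mul_tmul, mul_assoc]
  -- RHS
  have RHS : smashMul k A H κ ((a ⊗ₜ[k] h) ⊗ₜ[k]
      smashMul k A H κ ((b ⊗ₜ[k] g) ⊗ₜ[k] (c ⊗ₜ[k] l))) =
      ∑ m ∈ t.index, ∑ i ∈ r.index, ∑ j ∈ (u i).index,
        (a * (κ ((u i).left j) b * κ ((u i).right j * t.left m) c)) ⊗ₜ[k]
          (r.right i * (t.right m * l)) := by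
    rw [smashMul_repr k A H κ b c l t, tmul_sum, map_sum]
    refine Finset.sum_congr rfl fun m _ => ?_
    rw [smashMul_repr k A H κ a _ _ r]
    refine Finset.sum_congr rfl fun i _ => ?_
    rw [hC (r.left i) (t.left m) b c, comulLift_repr k A H _ _ (u i), Finset.mul_sum,
      sum_tmul]
    refine Finset.sum_congr rfl fun j _ => ?_
    simp
  rw [LHS, RHS]
  rw [Finset.sum_congr rfl fun i _ => Finset.sum_comm, Finset.sum_comm]
  refine Finset.sum_congr rfl fun m _ => ?_
  have key := Coalgebra.sum_tmul_tmul_eq (R := k) r u s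
  have E := congrArg (((LinearMap.mul' k A).rTensor H) ∘ₗ
      (TensorProduct.assoc k A A H).symm.toLinearMap ∘ₗ
      TensorProduct.map ((LinearMap.mulLeft k a) ∘ₗ κ.flip b)
        (TensorProduct.map ((κ.flip c) ∘ₗ LinearMap.mulRight k (t.left m))
          (LinearMap.mulRight k (t.right m * l)))) key
  simp only [map_sum, LinearMap.comp_apply, TensorProduct.map_tmul, LinearEquiv.coe_coe,
    TensorProduct.assoc_symm_tmul, LinearMap.rTensor_tmul, LinearMap.mul'_apply,
    LinearMap.mulLeft_apply, LinearMap.mulRight_apply, LinearMap.flip_apply] at E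
  simpa only [mul_assoc] using E.symm

lemma smash_assoc_of
    (hC : ∀ (h g : H) (a b : A),
        κ h (a * κ g b) =
          comulLift k A H (κ.flip a) ((κ.flip b) ∘ₗ LinearMap.mulRight k g) h)
    (ξ η ζ : A ⊗[k] H) :
    smashMul k A H κ (smashMul k A H κ (ξ ⊗ₜ[k] η) ⊗ₜ[k] ζ) =
      smashMul k A H κ (ξ ⊗ₜ[k] smashMul k A H κ (η ⊗ₜ[k] ζ)) := by
  induction ξ using TensorProduct.induction_on with
  | zero => simp only [zero_tmul, map_zero]
  | add x y hx hy => simp only [add_tmul, map_add, hx, hy]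
  | tmul a h =>
    induction η using TensorProduct.induction_on with
    | zero => simp only [zero_tmul, tmul_zero, map_zero]
    | add x y hx hy => simp only [add_tmul, tmul_add, map_add, hx, hy]
    | tmul b g =>
      induction ζ using TensorProduct.induction_on with
      | zero => simp only [tmul_zero, map_zero]
      | add x y hx hy => simp only [tmul_add, map_add, hx, hy]
      | tmul c l => exact coreA k A H κ hC a b c h g l

end Aux

/-- for `κ` satisfying (4.1.0), the following are equivalent:
(i) the smash multiplication `m` is associative; (ii) `m` is right `A`-linear for the
action `(a ⊗ h) ◁ b = a(h⁽¹⁾·b) ⊗ h⁽²⁾`; (iii) condition (4.1.1)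
`h·(a(g·b)) = (h⁽¹⁾·a)((h⁽²⁾g)·b)` holds. -/
theorem smash_assoc_iff (k A H : Type*) [CommRing k] [Ring A] [Algebra k A]
    [Ring H] [Bialgebra k H] (κ : H →ₗ[k] A →ₗ[k] A)
    (h410 : ∀ (h : H) (a b : A), κ h (a * b) = comulLift k A H (κ.flip a) (κ.flip b) h) :
    ((∀ ξ η ζ : A ⊗[k] H,
        smashMul k A H κ (smashMul k A H κ (ξ ⊗ₜ[k] η) ⊗ₜ[k] ζ) =
          smashMul k A H κ (ξ ⊗ₜ[k] smashMul k A H κ (η ⊗ₜ[k] ζ))) ↔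
      (∀ (h g : H) (a b : A),
        κ h (a * κ g b) =
          comulLift k A H (κ.flip a) ((κ.flip b) ∘ₗ LinearMap.mulRight k g) h)) ∧
    ((∀ (ξ η : A ⊗[k] H) (b : A),
        smashMul k A H κ (ξ ⊗ₜ[k] smashAct k A H κ (η ⊗ₜ[k] b)) =
          smashAct k A H κ (smashMul k A H κ (ξ ⊗ₜ[k] η) ⊗ₜ[k] b)) ↔
      (∀ (h g : H) (a b : A),
        κ h (a * κ g b) =
          comulLift k A H (κ.flip a) ((κ.flip b) ∘ₗ LinearMap.mulRight k g) h)) := by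
  constructor
  · constructor
    · intro hass h g a b
      exact coreB k A H κ a b h g (hass ((1:A) ⊗ₜ[k] h) (a ⊗ₜ[k] g) (b ⊗ₜ[k] (1:H)))
    · intro hC ξ η ζ
      exact smash_assoc_of k A H κ hC ξ η ζ
  · constructor
    · intro hlin h g a b
      have := hlin ((1:A) ⊗ₜ[k] h) (a ⊗ₜ[k] g) b
      rw [smashAct_eq_smashMul k A H κ b (a ⊗ₜ[k] g),
        smashAct_eq_smashMul k A H κ b
          (smashMul k A H κ (((1:A) ⊗ₜ[k] h) ⊗ₜ[k] (a ⊗ₜ[k] g)))] at this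
      exact coreB k A H κ a b h g this.symm
    · intro hC ξ η b
      rw [smashAct_eq_smashMul k A H κ b η,
        smashAct_eq_smashMul k A H κ b (smashMul k A H κ (ξ ⊗ₜ[k] η))]
      exact (smash_assoc_of k A H κ hC ξ η (b ⊗ₜ[k] (1:H))).symm
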